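/- Let u ≤ w in Bruhat order on Sₙ and let v ↦ v' be the greedy operation associated to w. For x ∈ ℝⁿ the following are equivalent: (i) x_b ≥ x_a for every (a,b) ∈ E_w(u); (ii) there exists v ∈ Sₙ with v' = u and x_{v(1)} ≤ x_{v(2)} ≤ ⋯ ≤ x_{v(n)}. Equivalently, the dual cone of the cone generated by {e_y − e_x : (x,y) ∈ E_w(u)} equals the union of the cones C(v) over all v ∈ Sₙ with v' = u. -/

import Mathlib

namespace SchubertToric

open Equiv

/-- The number of inversions (= the length `ℓ`) of a permutation. -/
def invCount {n : ℕ} (w : Equiv.Perm (Fin n)) : ℕ :=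
  ((Finset.univ : Finset (Fin n × Fin n)).filter fun p => p.1 < p.2 ∧ w p.2 < w p.1).card

/-- `initSeg w d` is the set `{w(1), …, w(d)}` (0-indexed: images of the first `d` indices). -/
def initSeg {n : ℕ} (w : Equiv.Perm (Fin n)) (d : ℕ) : Finset (Fin n) :=
  (Finset.univ.filter fun i : Fin n => (i : ℕ) < d).image w

/-- `domLE S T`: the increasing rearrangement of `S` is componentwise ≤ that of `T`. -/
def domLE {n : ℕ} (S T : Finset (Fin n)) : Prop :=
  List.Forall₂ (· ≤ ·) (S.sort (· ≤ ·)) (T.sort (· ≤ ·))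

/-- Bruhat order on `
Sₙ`, via the tableau criterion. -/
def bruhatLE {n : ℕ} (v w : Equiv.Perm (Fin n)) : Prop :=
  ∀ d : ℕ, domLE (initSeg v d) (initSeg w d)

/-- `GreedyRel w v vp` says that `vp = v'`, the result of the greedy operation associated
to `w`: there is a sequence of indices `idx 0, idx 1, …`, each chosen as the *least* index
not previously chosen such that the increasing rearrangement of the previously chosen values
together with the new value is componentwise at most `{w(1),…,w(d)}`, and `vp d = v (idx d)`. -/
def GreedyRel {n : ℕ} (w v vp : Equiv.Perm (Fin n)) : Prop :=
  ∃ idx : Fin n → Fin n,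
    (∀ d : Fin n, vp d = v (idx d)) ∧
    ∀ d : Fin n,
      IsLeast {i : Fin n |
        (∀ e : Fin n, e < d → idx e ≠ i) ∧
        domLE (insert (v i)
            ((Finset.univ.filter fun e : Fin n => e < d).image fun e => v (idx e)))
          (initSeg w ((d : ℕ) + 1))}
        (idx d)

/-- Right weak order: `rightWeakLE u v` iff `v = u·s_{i₁}⋯s_{i_k}` with
`ℓ(u·s_{i₁}⋯s_{i_j}) = ℓ(u) + j` for all `0 ≤ j ≤ k`. -/
def rightWeakLE {n : ℕ} (u v : Equiv.Perm (Fin n)) : Prop :=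
  ∃ L : List (Equiv.Perm (Fin n)),
    (∀ s ∈ L, ∃ (i : Fin n) (h : (i : ℕ) + 1 < n), s = Equiv.swap i ⟨(i : ℕ) + 1, h⟩) ∧
    v = u * L.prod ∧
    ∀ k ≤ L.length, invCount (u * (L.take k).prod) = invCount u + k

/-- `Ref(w) = {(w(i),w(j)) : i < j, ℓ(w) − ℓ(t_{w(i),w(j)}·w) = 1}`. -/
def RefSet {n : ℕ} (w : Equiv.Perm (Fin n)) : Set (Fin n × Fin n) :=
  {p | ∃ i j : Fin n, i < j ∧ p = (w i, w j) ∧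
    invCount (Equiv.swap (w i) (w j) * w) + 1 = invCount w}

/-- The (undirected) graph `Γ_w` on `Fin n` whose edges are the pairs in `Ref(w)`. -/
def refGraph {n : ℕ} (w : Equiv.Perm (Fin n)) : SimpleGraph (Fin n) :=
  SimpleGraph.fromRel fun a b => (a, b) ∈ RefSet w

/-- The vertices of `Γ_w`: the integers occurring in pairs of `Ref(w)`. -/
def refVerts {n : ℕ} (w : Equiv.Perm (Fin n)) : Set (Fin n) :=
  {a | ∃ b, (a, b) ∈ RefSet w ∨ (b, a) ∈ RefSet w}

/-- The cone `C(v) = {x ∈ ℝⁿ : x_{v(1)} ≤ x_{v(2)} ≤ ⋯ ≤ x_{v(n)}}`. -/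
def coneC {n : ℕ} (v : Equiv.Perm (Fin n)) : Set (Fin n → ℝ) :=
  {x | ∀ i j : Fin n, i ≤ j → x (v i) ≤ x (v j)}

/-- `Ẽ_w(u) = {(u(i),u(j)) : i < j, t_{u(i),u(j)}·u ≤ w, |ℓ(u) − ℓ(t_{u(i),u(j)}·u)| = 1}`. -/
def Etil {n : ℕ} (w u : Equiv.Perm (Fin n)) : Set (Fin n × Fin n) :=
  {p | ∃ i j : Fin n, i < j ∧ p = (u i, u j) ∧
    bruhatLE (Equiv.swap (u i) (u j) * u) w ∧
    (invCount (Equiv.swap (u i) (u j) * u) + 1 = invCount u ∨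
      invCount u + 1 = invCount (Equiv.swap (u i) (u j) * u))}

/-- An element `p = (a,b)` of `Ẽ_w(u)` is decomposable if it is a sum (under
`(a,b)+(b,c) = (a,c)`) of two or more other elements of `Ẽ_w(u)`. -/
def Decomposable {n : ℕ} (w u : Equiv.Perm (Fin n)) (p : Fin n × Fin n) : Prop :=
  ∃ (m : ℕ) (c : ℕ → Fin n), 2 ≤ m ∧ c 0 = p.1 ∧ c m = p.2 ∧
    ∀ i < m, (c i, c (i + 1)) ∈ Etil w u ∧ (c i, c (i + 1)) ≠ p

/-- `E_w(u)`: the indecomposable elements of `Ẽ_w(u)`. -/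
def Ew {n : ℕ} (w u : Equiv.Perm (Fin n)) : Set (Fin n × Fin n) :=
  {p | p ∈ Etil w u ∧ ¬ Decomposable w u p}

/-- The longest element `w₀ = n(n−1)⋯21` of `Sₙ`. -/
def w0 {n : ℕ} : Equiv.Perm (Fin n) :=
  Function.Involutive.toPerm Fin.rev Fin.rev_rev

section Part1
open Finset
variable {n : ℕ}

/-- count of elements of `S` that are `≥ g`. -/
def cnt {n : ℕ} (S : Finset (Fin n)) (g : Fin n) : ℕ := (S.filter (fun s => g ≤ s)).card

lemma cnt_eq_length (S : Finset (Fin n)) (g : Fin n) :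
    cnt S g = ((S.sort (· ≤ ·)).filter (fun s => g ≤ s)).length := by
  have hp : ((S.sort (· ≤ ·)).filter (fun s => decide (g ≤ s))).Perm
      (S.toList.filter (fun s => decide (g ≤ s))) :=
    (Finset.sort_perm_toList _ _).filter _
  rw [show ((S.sort (· ≤ ·)).filter (fun s => g ≤ s)) = ((S.sort (· ≤ ·)).filter (fun s => decide (g ≤ s))) from rfl]
  rw [hp.length_eq]
  rw [cnt, Finset.card, Finset.filter_val, ← Finset.coe_toList S, Multiset.filter_coe,
    Multiset.coe_card]

lemma counts_le_of_forall₂ (l₁ l₂ : List (Fin n)) (h : List.Forall₂ (· ≤ ·) l₁ l₂) (g : Fin n) :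
    (l₁.filter (fun s => g ≤ s)).length ≤ (l₂.filter (fun s => g ≤ s)).length := by
  induction h with
  | nil => simp
  | @cons a b l₁' l₂' hab _ ih =>
    rw [List.filter_cons, List.filter_cons]
    by_cases hga : g ≤ a
    · have hgb : g ≤ b := le_trans hga hab
      rw [if_pos (decide_eq_true hga), if_pos (decide_eq_true hgb)]
      simp only [List.length_cons]
      omega
    · by_cases hgb : g ≤ b
      · rw [if_neg (by simpa using hga), if_pos (decide_eq_true hgb)]
        exact le_trans ih (by simp)
      · rw [if_neg (by simpa using hga), if_neg (by simpa using hgb)]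
        exact ih

lemma forall₂_of_counts : ∀ (l₁ l₂ : List (Fin n)), l₁.Pairwise (· ≤ ·) → l₂.Pairwise (· ≤ ·) →
    l₁.length = l₂.length →
    (∀ g, (l₁.filter (fun s => g ≤ s)).length ≤ (l₂.filter (fun s => g ≤ s)).length) →
    List.Forall₂ (· ≤ ·) l₁ l₂
  | [], l₂, _, _, hlen, _ => by
      have : l₂ = [] := List.length_eq_zero_iff.mp (by simpa using hlen.symm)
      subst this; exact List.Forall₂.nil
  | a :: t, [], _, _, hlen, _ => by simp at hlen
  | a :: t, b :: t₂, h₁, h₂, hlen, hc => by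
      rw [List.pairwise_cons] at h₁ h₂
      simp only [List.length_cons] at hlen
      have hab : a ≤ b := by
        have hc' := hc a
        rw [List.filter_cons, List.filter_cons] at hc'
        rw [List.filter_eq_self.mpr (fun x hx => decide_eq_true (h₁.1 x hx))] at hc'
        rw [if_pos (by simp)] at hc'
        by_contra hab
        rw [if_neg (by simpa using hab)] at hc'
        have := List.length_filter_le (fun s => decide (a ≤ s)) t₂
        simp only [List.length_cons] at hc'
        omega
      have htail : ∀ g, (t.filter (fun s => g ≤ s)).length ≤ (t₂.filter (fun s => g ≤ s)).length := by
        intro g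
        have hg := hc g
        rw [List.filter_cons, List.filter_cons] at hg
        by_cases hga : g ≤ a
        · have hgb : g ≤ b := le_trans hga hab
          rw [if_pos (decide_eq_true hga), if_pos (decide_eq_true hgb)] at hg
          simp only [List.length_cons] at hg
          omega
        · by_cases hgb : g ≤ b
          · calc (t.filter (fun s => g ≤ s)).length ≤ t.length := List.length_filter_le _ _
              _ = t₂.length := by omega
              _ = (t₂.filter (fun s => g ≤ s)).length := by
                  rw [List.filter_eq_self.mpr]
                  intro x hx
                  exact decide_eq_true (le_trans hgb (h₂.1 x hx))
          · rw [if_neg (by simpa using hga), if_neg (by simpa using hgb)] at hg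
            exact hg
      exact List.Forall₂.cons hab (forall₂_of_counts t t₂ h₁.2 h₂.2 (by omega) htail)

lemma domLE_card {S T : Finset (Fin n)} (h : domLE S T) : S.card = T.card := by
  have := h.length_eq
  rwa [Finset.length_sort, Finset.length_sort] at this

lemma domLE_iff_cnt {S T : Finset (Fin n)} (hcard : S.card = T.card) :
    domLE S T ↔ ∀ g, cnt S g ≤ cnt T g := by
  constructor
  · intro h g
    rw [cnt_eq_length, cnt_eq_length]
    exact counts_le_of_forall₂ _ _ h g
  · intro h
    refine forall₂_of_counts _ _ (Finset.pairwise_sort _ _) (Finset.pairwise_sort _ _) ?_ ?_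
    · rw [Finset.length_sort, Finset.length_sort]; exact hcard
    · intro g
      rw [← cnt_eq_length, ← cnt_eq_length]
      exact h g
end Part1
section Part2
open Finset Equiv
variable {n : ℕ}

lemma cnt_le_of_domLE {S T : Finset (Fin n)} (h : domLE S T) (g : Fin n) : cnt S g ≤ cnt T g := by
  rw [cnt_eq_length, cnt_eq_length]
  exact counts_le_of_forall₂ _ _ h g

/-- count of positions `q < s` with `σ q ≥ g`. -/
def pcnt {n : ℕ} (σ : Perm (Fin n)) (s : ℕ) (g : Fin n) : ℕ :=
  (Finset.univ.filter (fun q : Fin n => (q : ℕ) < s ∧ g ≤ σ q)).card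

lemma cnt_initSeg (σ : Perm (Fin n)) (s : ℕ) (g : Fin n) :
    cnt (initSeg σ s) g = pcnt σ s g := by
  classical
  rw [cnt, initSeg, Finset.filter_image]
  rw [Finset.card_image_of_injective _ σ.injective, Finset.filter_filter, pcnt]

lemma card_initSeg (σ : Perm (Fin n)) (s : ℕ) : (initSeg σ s).card = min s n := by
  classical
  rw [initSeg, Finset.card_image_of_injective _ σ.injective]
  have : (Finset.univ.filter (fun i : Fin n => (i : ℕ) < s)).card
      = ((Finset.range n).filter (fun i => i < s)).card := by
    refine Finset.card_bij (fun q _ => (q : ℕ)) ?_ ?_ ?_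
    · intro a ha
      simp only [Finset.mem_filter, Finset.mem_univ, true_and] at ha
      simp only [Finset.mem_filter, Finset.mem_range]
      exact ⟨a.2, ha⟩
    · intro a _ b _ hab; exact Fin.val_injective hab
    · intro b hb; simp only [Finset.mem_filter, Finset.mem_range] at hb
      exact ⟨⟨b, hb.1⟩, by simp [hb.2], rfl⟩
  rw [this]
  have : (Finset.range n).filter (fun i => i < s) = Finset.range (min s n) := by
    ext a; simp only [Finset.mem_filter, Finset.mem_range, Nat.lt_min]; omega
  rw [this, Finset.card_range]

lemma mem_initSeg {σ : Perm (Fin n)} {d : ℕ} {x : Fin n} :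
    x ∈ initSeg σ d ↔ ((σ.symm x : Fin n) : ℕ) < d := by
  simp only [initSeg, Finset.mem_image, Finset.mem_filter, Finset.mem_univ, true_and]
  constructor
  · rintro ⟨i, hi, rfl⟩; simpa using hi
  · intro h; exact ⟨σ.symm x, h, by simp⟩

lemma initSeg_succ (σ : Perm (Fin n)) (d : ℕ) (hd : d < n) :
    initSeg σ (d + 1) = insert (σ ⟨d, hd⟩) (initSeg σ d) := by
  ext x
  simp only [mem_initSeg, Finset.mem_insert]
  constructor
  · intro h
    rcases Nat.lt_succ_iff_lt_or_eq.mp h with h' | h'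
    · exact Or.inr (by simpa using h')
    · left
      have : σ.symm x = ⟨d, hd⟩ := Fin.ext h'
      rw [← this]; simp
  · rintro (rfl | h)
    · simp [hd]
    · omega

lemma not_mem_initSeg_self (σ : Perm (Fin n)) (d : ℕ) (hd : d < n) :
    σ ⟨d, hd⟩ ∉ initSeg σ d := by
  rw [mem_initSeg]; simp

lemma cnt_insert {S : Finset (Fin n)} {x : Fin n} (hx : x ∉ S) (g : Fin n) :
    cnt (insert x S) g = cnt S g + if g ≤ x then 1 else 0 := by
  classical
  rw [cnt, cnt, Finset.filter_insert]
  by_cases h : g ≤ x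
  · rw [if_pos h, if_pos h, Finset.card_insert_of_notMem (by simp [hx])]
  · rw [if_neg h, if_neg h, Nat.add_zero]

lemma pcnt_succ (σ : Perm (Fin n)) (d : ℕ) (hd : d < n) (g : Fin n) :
    pcnt σ (d + 1) g = pcnt σ d g + if g ≤ σ ⟨d, hd⟩ then 1 else 0 := by
  rw [← cnt_initSeg, ← cnt_initSeg, initSeg_succ σ d hd,
    cnt_insert (not_mem_initSeg_self σ d hd)]

lemma pcnt_mono_pos (σ : Perm (Fin n)) {s t : ℕ} (h : s ≤ t) (g : Fin n) :
    pcnt σ s g ≤ pcnt σ t g := by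
  apply Finset.card_le_card
  intro q hq
  simp only [Finset.mem_filter, Finset.mem_univ, true_and] at *
  exact ⟨lt_of_lt_of_le hq.1 h, hq.2⟩

lemma pcnt_mono_val (σ : Perm (Fin n)) (s : ℕ) {g h : Fin n} (hgh : g ≤ h) :
    pcnt σ s h ≤ pcnt σ s g := by
  apply Finset.card_le_card
  intro q hq
  simp only [Finset.mem_filter, Finset.mem_univ, true_and] at *
  exact ⟨hq.1, le_trans hgh hq.2⟩

/-- segment count: positions `d ≤ q < s` with `σ q ≥ g`. -/
def scnt {n : ℕ} (σ : Perm (Fin n)) (d s : ℕ) (g : Fin n) : ℕ :=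
  (Finset.univ.filter (fun q : Fin n => d ≤ (q : ℕ) ∧ (q : ℕ) < s ∧ g ≤ σ q)).card

lemma pcnt_split (σ : Perm (Fin n)) {d s : ℕ} (h : d ≤ s) (g : Fin n) :
    pcnt σ s g = pcnt σ d g + scnt σ d s g := by
  classical
  rw [pcnt, pcnt, scnt, ← Finset.card_union_of_disjoint]
  · congr 1
    ext q
    simp only [Finset.mem_union, Finset.mem_filter, Finset.mem_univ, true_and]
    constructor
    · rintro ⟨h1, h2⟩
      rcases lt_or_ge (q : ℕ) d with h3 | h3
      · exact Or.inl ⟨h3, h2⟩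
      · exact Or.inr ⟨h3, h1, h2⟩
    · rintro (⟨h1, h2⟩ | ⟨h1, h2, h3⟩)
      · exact ⟨lt_of_lt_of_le h1 h, h2⟩
      · exact ⟨h2, h3⟩
  · rw [Finset.disjoint_left]
    intro q hq hq'
    simp only [Finset.mem_filter] at hq hq'
    omega

lemma bruhat_pcnt {u w : Perm (Fin n)} (huw : bruhatLE u w) (s : ℕ) (g : Fin n) :
    pcnt u s g ≤ pcnt w s g := by
  rw [← cnt_initSeg, ← cnt_initSeg]
  exact cnt_le_of_domLE (huw s) g

lemma bruhatLE_of_pcnt {u w : Perm (Fin n)} (h : ∀ s g, pcnt u s g ≤ pcnt w s g) :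
    bruhatLE u w := by
  intro d
  rw [domLE_iff_cnt (by rw [card_initSeg, card_initSeg])]
  intro g
  rw [cnt_initSeg, cnt_initSeg]
  exact h d g
end Part2
section Part3
open Finset Equiv
variable {n : ℕ}

lemma swap_flip {i j p q : Fin n} (hij : i < j) (hqp : q < p) :
    Equiv.swap i j p < Equiv.swap i j q ↔ (p = j ∧ q = i) ∨ (q = i ∧ p < j) ∨ (p = j ∧ i < q) := by
  rw [Equiv.swap_apply_def, Equiv.swap_apply_def]
  split_ifs <;> simp only [Fin.lt_def, Fin.ext_iff] at * <;> omega

lemma invCount_mul_swap {u : Perm (Fin n)} {i j : Fin n} (hij : i < j) (hv : u i < u j)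
    (hmid : ∀ k, i < k → k < j → ¬(u i < u k ∧ u k < u j)) :
    invCount (u * Equiv.swap i j) = invCount u + 1 := by
  classical
  set τ := Equiv.swap i j with hτ
  have step1 : invCount (u * τ) =
      (Finset.univ.filter (fun p : Fin n × Fin n => τ p.1 < τ p.2 ∧ u p.2 < u p.1)).card := by
    rw [invCount]
    refine Finset.card_nbij' (fun p => (τ p.1, τ p.2)) (fun p => (τ p.1, τ p.2)) ?_ ?_ ?_ ?_
    · intro p hp
      simp only [Finset.mem_coe, Finset.mem_filter, Finset.mem_univ, true_and, Equiv.Perm.mul_apply, Set.mem_setOf_eq] at hp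
      simp only [Finset.mem_coe, Finset.mem_filter, Finset.mem_univ, true_and, hτ, Equiv.swap_apply_self]
      simpa [hτ] using hp
    · intro p hp
      simp only [Finset.mem_coe, Finset.mem_filter, Finset.mem_univ, true_and] at hp
      simp only [Finset.mem_coe, Finset.mem_filter, Finset.mem_univ, true_and, Equiv.Perm.mul_apply, hτ,
        Equiv.swap_apply_self]
      exact hp
    · intro p _; simp [hτ, Equiv.swap_apply_self]
    · intro p _; simp [hτ, Equiv.swap_apply_self]
  -- sets
  set A := (Finset.univ.filter (fun p : Fin n × Fin n => p.1 < p.2 ∧ u p.2 < u p.1)) with hA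
  set B := (Finset.univ.filter (fun p : Fin n × Fin n => τ p.1 < τ p.2 ∧ u p.2 < u p.1)) with hB
  set X := (Finset.univ.filter
    (fun p : Fin n × Fin n => (τ p.1 < τ p.2 ∧ u p.2 < u p.1) ∧ ¬ (p.1 < p.2))) with hX
  set Y := (Finset.univ.filter
    (fun p : Fin n × Fin n => (p.1 < p.2 ∧ u p.2 < u p.1) ∧ ¬ (τ p.1 < τ p.2))) with hY
  set Z := (Finset.univ.filter
    (fun p : Fin n × Fin n => (p.1 < p.2 ∧ u p.2 < u p.1) ∧ (τ p.1 < τ p.2))) with hZ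
  have hZB : B.filter (fun p : Fin n × Fin n => p.1 < p.2) = Z := by
    ext p
    simp only [hB, hZ, Finset.mem_filter, Finset.mem_univ, true_and]
    try tauto
  have hXB : B.filter (fun p : Fin n × Fin n => ¬ p.1 < p.2) = X := by
    ext p
    simp only [hB, hX, Finset.mem_filter, Finset.mem_univ, true_and]
    try tauto
  have hZA : A.filter (fun p : Fin n × Fin n => τ p.1 < τ p.2) = Z := by
    ext p
    simp only [hA, hZ, Finset.mem_filter, Finset.mem_univ, true_and]
    try tauto
  have hYA : A.filter (fun p : Fin n × Fin n => ¬ τ p.1 < τ p.2) = Y := by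
    ext p
    simp only [hA, hY, Finset.mem_filter, Finset.mem_univ, true_and]
    try tauto
  have hBcard : B.card = Z.card + X.card := by
    rw [← hZB, ← hXB]
    exact (Finset.card_filter_add_card_filter_not
      (p := fun p : Fin n × Fin n => p.1 < p.2) (s := B)).symm
  have hAcard : A.card = Z.card + Y.card := by
    rw [← hZA, ← hYA]
    exact (Finset.card_filter_add_card_filter_not
      (p := fun p : Fin n × Fin n => τ p.1 < τ p.2) (s := A)).symm
  -- characterizations
  have memX : ∀ p : Fin n × Fin n, p ∈ X ↔
      (p = (j, i)) ∨ (i < p.1 ∧ p.1 < j ∧ p.2 = i ∧ u i < u p.1) ∨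
        (p.1 = j ∧ i < p.2 ∧ p.2 < j ∧ u p.2 < u j) := by
    intro p
    rw [hX, Finset.mem_filter]
    simp only [Finset.mem_univ, true_and]
    constructor
    · rintro ⟨⟨h1, h2⟩, h3⟩
      have hqp : p.2 < p.1 := lt_of_le_of_ne (not_lt.mp h3) (fun h => by
        rw [h] at h2; exact lt_irrefl _ h2)
      rcases (swap_flip hij hqp).mp h1 with ⟨ha, hb⟩ | ⟨ha, hb⟩ | ⟨ha, hb⟩
      · exact Or.inl (Prod.ext ha hb)
      · exact Or.inr (Or.inl ⟨ha ▸ hqp, hb, ha, by rw [← ha]; exact h2⟩)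
      · exact Or.inr (Or.inr ⟨ha, hb, ha ▸ hqp, by rw [← ha]; exact h2⟩)
    · rintro (rfl | ⟨h1, h2, h3, h4⟩ | ⟨h1, h2, h3, h4⟩)
      · exact ⟨⟨(swap_flip hij hij).mpr (Or.inl ⟨rfl, rfl⟩), hv⟩, not_lt.mpr (le_of_lt hij)⟩
      · have hqp : p.2 < p.1 := h3 ▸ h1
        exact ⟨⟨(swap_flip hij hqp).mpr (Or.inr (Or.inl ⟨h3, h2⟩)), by rw [h3]; exact h4⟩,
          not_lt.mpr (le_of_lt hqp)⟩
      · have hqp : p.2 < p.1 := h1 ▸ h3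
        exact ⟨⟨(swap_flip hij hqp).mpr (Or.inr (Or.inr ⟨h1, h2⟩)), by rw [h1]; exact h4⟩,
          not_lt.mpr (le_of_lt hqp)⟩
  have memY : ∀ p : Fin n × Fin n, p ∈ Y ↔
      (p.1 = i ∧ i < p.2 ∧ p.2 < j ∧ u p.2 < u i) ∨
        (p.2 = j ∧ i < p.1 ∧ p.1 < j ∧ u j < u p.1) := by
    intro p
    rw [hY, Finset.mem_filter]
    simp only [Finset.mem_univ, true_and]
    constructor
    · rintro ⟨⟨h1, h2⟩, h3⟩
      have hne : τ p.2 ≠ τ p.1 := fun h => (by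
        have := τ.injective h
        rw [this] at h2; exact lt_irrefl _ h2)
      have h3' : τ p.2 < τ p.1 := lt_of_le_of_ne (not_lt.mp h3) hne
      rcases (swap_flip hij h1).mp h3' with ⟨ha, hb⟩ | ⟨ha, hb⟩ | ⟨ha, hb⟩
      · rw [ha, hb] at h2; exact absurd hv (not_lt.mpr (le_of_lt h2))
      · exact Or.inl ⟨ha, ha ▸ h1, hb, by rw [← ha]; exact h2⟩
      · exact Or.inr ⟨ha, hb, ha ▸ h1, by rw [← ha]; exact h2⟩
    · rintro (⟨h1, h2, h3, h4⟩ | ⟨h1, h2, h3, h4⟩)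
      · have hpq : p.1 < p.2 := h1 ▸ h2
        have h3' : τ p.2 < τ p.1 := (swap_flip hij hpq).mpr (Or.inr (Or.inl ⟨h1, h3⟩))
        exact ⟨⟨hpq, by rw [h1]; exact h4⟩, lt_asymm h3'⟩
      · have hpq : p.1 < p.2 := h1 ▸ h3
        have h3' : τ p.2 < τ p.1 := (swap_flip hij hpq).mpr (Or.inr (Or.inr ⟨h1, h2⟩))
        exact ⟨⟨hpq, by rw [h1]; exact h4⟩, lt_asymm h3'⟩
  -- the bijection between X.erase (j,i) and Y
  have hjiX : ((j, i) : Fin n × Fin n) ∈ X := (memX _).mpr (Or.inl rfl)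
  have hkey : X.card = Y.card + 1 := by
    have he : X.card = (X.erase (j, i)).card + 1 := (Finset.card_erase_add_one hjiX).symm
    have hbij : (X.erase ((j, i) : Fin n × Fin n)).card = Y.card := by
      refine Finset.card_nbij' (fun q => if q.2 = i then (q.1, j) else (i, q.2))
        (fun q => if q.2 = j then (q.1, i) else (j, q.2)) ?_ ?_ ?_ ?_
      · -- maps X.erase into Y
        intro p hp
        rw [Finset.mem_coe, Finset.mem_erase] at hp
        dsimp only
        rcases (memX p).mp hp.2 with h | ⟨h1, h2, h3, h4⟩ | ⟨h1, h2, h3, h4⟩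
        · exact absurd h hp.1
        · rw [if_pos h3]
          refine (memY _).mpr (Or.inr ⟨rfl, h1, h2, ?_⟩)
          rcases lt_or_ge (u j) (u p.1) with h | h
          · exact h
          · have hne : u p.1 ≠ u j := fun hc => (ne_of_lt h2) (u.injective hc)
            exact absurd ⟨h4, lt_of_le_of_ne h hne⟩ (hmid p.1 h1 h2)
        · rw [if_neg (fun hc : p.2 = i => lt_irrefl i (hc ▸ h2))]
          refine (memY _).mpr (Or.inl ⟨rfl, h2, h3, ?_⟩)
          rcases lt_or_ge (u p.2) (u i) with h | h
          · exact h
          · have hne : u i ≠ u p.2 := fun hc => (ne_of_lt h2) (u.injective hc)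
            exact absurd ⟨lt_of_le_of_ne h hne, h4⟩ (hmid p.2 h2 h3)
      · -- maps Y into X.erase
        intro q hq
        dsimp only
        rcases (memY q).mp hq with ⟨h1, h2, h3, h4⟩ | ⟨h1, h2, h3, h4⟩
        · rw [if_neg (ne_of_lt h3)]
          rw [Finset.mem_coe, Finset.mem_erase]
          refine ⟨fun hc => (ne_of_lt h2).symm (congrArg Prod.snd hc), ?_⟩
          exact (memX _).mpr (Or.inr (Or.inr ⟨rfl, h2, h3, lt_trans h4 hv⟩))
        · rw [if_pos h1]
          rw [Finset.mem_coe, Finset.mem_erase]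
          refine ⟨fun hc => (ne_of_lt h3) (congrArg Prod.fst hc), ?_⟩
          exact (memX _).mpr (Or.inr (Or.inl ⟨h2, h3, rfl, lt_trans hv h4⟩))
      · -- left inverse
        intro p hp
        rw [Finset.mem_coe, Finset.mem_erase] at hp
        dsimp only
        rcases (memX p).mp hp.2 with h | ⟨h1, h2, h3, h4⟩ | ⟨h1, h2, h3, h4⟩
        · exact absurd h hp.1
        · rw [if_pos h3]
          dsimp only
          rw [if_pos rfl]
          exact Prod.ext rfl h3.symm
        · rw [if_neg (fun hc : p.2 = i => lt_irrefl i (hc ▸ h2))]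
          dsimp only
          rw [if_neg (ne_of_lt h3)]
          exact Prod.ext h1.symm rfl
      · -- right inverse
        intro q hq
        dsimp only
        rcases (memY q).mp hq with ⟨h1, h2, h3, h4⟩ | ⟨h1, h2, h3, h4⟩
        · rw [if_neg (ne_of_lt h3)]
          dsimp only
          rw [if_neg (fun hc : q.2 = i => lt_irrefl i (hc ▸ h2))]
          exact Prod.ext h1.symm rfl
        · rw [if_pos h1]
          dsimp only
          rw [if_pos rfl]
          exact Prod.ext rfl h1.symm
    omega
  rw [step1]
  have hAu : invCount u = A.card := rfl
  omega

end Part3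
section Part4
open Finset Equiv
variable {n : ℕ}

lemma invCount_mul_swap_desc {u : Perm (Fin n)} {i j : Fin n} (hij : i < j) (hv : u j < u i)
    (hmid : ∀ k, i < k → k < j → ¬(u j < u k ∧ u k < u i)) :
    invCount u = invCount (u * Equiv.swap i j) + 1 := by
  have h1 : (u * Equiv.swap i j) i = u j := by
    rw [Equiv.Perm.mul_apply, Equiv.swap_apply_left]
  have h2 : (u * Equiv.swap i j) j = u i := by
    rw [Equiv.Perm.mul_apply, Equiv.swap_apply_right]
  have h := invCount_mul_swap (u := u * Equiv.swap i j) hij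
    (by rw [h1, h2]; exact hv) (fun k hik hkj => by
      rw [h1, h2, Equiv.Perm.mul_apply,
        Equiv.swap_apply_of_ne_of_ne (ne_of_gt hik) (ne_of_lt hkj)]
      exact hmid k hik hkj)
  rw [mul_assoc, Equiv.swap_mul_self, mul_one] at h
  omega

lemma symm_mul_swap (u : Perm (Fin n)) (i j x : Fin n) :
    (u * Equiv.swap i j).symm x = Equiv.swap i j (u.symm x) := by
  rw [show (u * Equiv.swap i j).symm x = (Equiv.swap i j).symm (u.symm x) from rfl,
    Equiv.symm_swap]

lemma initSeg_mul_swap {u : Perm (Fin n)} {i j : Fin n} (hij : i < j) {s : ℕ}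
    (hs1 : (i : ℕ) < s) (hs2 : s ≤ (j : ℕ)) :
    initSeg (u * Equiv.swap i j) s = insert (u j) ((initSeg u s).erase (u i)) := by
  ext x
  rw [mem_initSeg, Finset.mem_insert, Finset.mem_erase, mem_initSeg, symm_mul_swap]
  rcases eq_or_ne (u.symm x) i with hy | hy
  · rw [hy, Equiv.swap_apply_left]
    have hx : x = u i := by rw [← hy]; simp
    constructor
    · intro h; omega
    · rintro (h | ⟨h, _⟩)
      · exact absurd (u.injective (hx.symm.trans h)) (ne_of_lt hij)
      · exact absurd hx h
  · rcases eq_or_ne (u.symm x) j with hy2 | hy2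
    · rw [hy2, Equiv.swap_apply_right]
      have hx : x = u j := by rw [← hy2]; simp
      constructor
      · intro _; exact Or.inl hx
      · intro _; omega
    · rw [Equiv.swap_apply_of_ne_of_ne hy hy2]
      constructor
      · intro h
        refine Or.inr ⟨?_, h⟩
        intro hc
        exact hy (by rw [hc]; simp)
      · rintro (h | ⟨_, h⟩)
        · exact absurd (by rw [h]; simp) hy2
        · exact h

lemma initSeg_mul_swap_outside {u : Perm (Fin n)} {i j : Fin n} (hij : i < j) {s : ℕ}
    (hs : s ≤ (i : ℕ) ∨ (j : ℕ) < s) :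
    initSeg (u * Equiv.swap i j) s = initSeg u s := by
  ext x
  rw [mem_initSeg, mem_initSeg, symm_mul_swap]
  rcases eq_or_ne (u.symm x) i with hy | hy
  · rw [hy, Equiv.swap_apply_left]
    have := hij
    simp only [Fin.lt_def] at this
    omega
  · rcases eq_or_ne (u.symm x) j with hy2 | hy2
    · rw [hy2, Equiv.swap_apply_right]
      have := hij
      simp only [Fin.lt_def] at this
      omega
    · rw [Equiv.swap_apply_of_ne_of_ne hy hy2]

lemma cnt_erase {S : Finset (Fin n)} {x : Fin n} (hx : x ∈ S) (g : Fin n) :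
    cnt S g = cnt (S.erase x) g + if g ≤ x then 1 else 0 := by
  classical
  conv_lhs => rw [← Finset.insert_erase hx]
  rw [cnt_insert (Finset.notMem_erase x S)]

lemma uj_not_mem_erase {u : Perm (Fin n)} {i j : Fin n} {s : ℕ} (hs2 : s ≤ (j : ℕ)) :
    u j ∉ (initSeg u s).erase (u i) := by
  rw [Finset.mem_erase, mem_initSeg]
  intro ⟨_, h⟩
  simp at h
  omega

lemma ui_mem_initSeg {u : Perm (Fin n)} {i : Fin n} {s : ℕ} (hs1 : (i : ℕ) < s) :
    u i ∈ initSeg u s := by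
  rw [mem_initSeg]; simpa using hs1

lemma cnt_after_swap {u : Perm (Fin n)} {i j : Fin n} (hij : i < j) {s : ℕ}
    (hs1 : (i : ℕ) < s) (hs2 : s ≤ (j : ℕ)) (g : Fin n) :
    cnt (initSeg (u * Equiv.swap i j) s) g + (if g ≤ u i then 1 else 0)
      = pcnt u s g + (if g ≤ u j then 1 else 0) := by
  rw [initSeg_mul_swap hij hs1 hs2, cnt_insert (uj_not_mem_erase hs2), ← cnt_initSeg,
    cnt_erase (ui_mem_initSeg hs1) g]
  ring

/-- ascending step lemma: box positivity gives membership in `Etil`. -/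
lemma mem_Etil_asc {w u : Perm (Fin n)} (huw : bruhatLE u w) {i j : Fin n} (hij : i < j)
    (hv : u i < u j) (hmid : ∀ k, i < k → k < j → ¬(u i < u k ∧ u k < u j))
    (hbox : ∀ (s : ℕ) (g : Fin n), (i : ℕ) < s → s ≤ (j : ℕ) → u i < g → g ≤ u j →
      pcnt u s g + 1 ≤ pcnt w s g) :
    (u i, u j) ∈ Etil w u := by
  have hswap : Equiv.swap (u i) (u j) * u = u * Equiv.swap i j :=
    (Equiv.mul_swap_eq_swap_mul u i j).symm
  refine ⟨i, j, hij, rfl, ?_, Or.inr ?_⟩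
  · rw [hswap]
    apply bruhatLE_of_pcnt
    intro s g
    rcases le_or_gt s (i : ℕ) with hs | hs1
    · rw [← cnt_initSeg, initSeg_mul_swap_outside hij (Or.inl hs), cnt_initSeg]
      exact bruhat_pcnt huw s g
    · rcases lt_or_ge (j : ℕ) s with hs2 | hs2
      · rw [← cnt_initSeg, initSeg_mul_swap_outside hij (Or.inr hs2), cnt_initSeg]
        exact bruhat_pcnt huw s g
      · have hkey := cnt_after_swap (u := u) hij hs1 hs2 g
        rw [cnt_initSeg] at hkey
        by_cases hgi : g ≤ u i
        · have hgj : g ≤ u j := le_trans hgi (le_of_lt hv)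
          rw [if_pos hgi, if_pos hgj] at hkey
          have := bruhat_pcnt huw s g
          omega
        · by_cases hgj : g ≤ u j
          · rw [if_neg hgi, if_pos hgj] at hkey
            have := hbox s g hs1 hs2 (lt_of_not_ge hgi) hgj
            omega
          · rw [if_neg hgi, if_neg hgj] at hkey
            have := bruhat_pcnt huw s g
            omega
  · rw [hswap]
    exact (invCount_mul_swap hij hv hmid).symm

/-- descending step lemma: free membership in `Etil`. -/
lemma mem_Etil_desc {w u : Perm (Fin n)} (huw : bruhatLE u w) {i j : Fin n} (hij : i < j)
    (hv : u j < u i) (hmid : ∀ k, i < k → k < j → ¬(u j < u k ∧ u k < u i)) :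
    (u i, u j) ∈ Etil w u := by
  have hswap : Equiv.swap (u i) (u j) * u = u * Equiv.swap i j :=
    (Equiv.mul_swap_eq_swap_mul u i j).symm
  refine ⟨i, j, hij, rfl, ?_, Or.inl ?_⟩
  · rw [hswap]
    apply bruhatLE_of_pcnt
    intro s g
    rcases le_or_gt s (i : ℕ) with hs | hs1
    · rw [← cnt_initSeg, initSeg_mul_swap_outside hij (Or.inl hs), cnt_initSeg]
      exact bruhat_pcnt huw s g
    · rcases lt_or_ge (j : ℕ) s with hs2 | hs2
      · rw [← cnt_initSeg, initSeg_mul_swap_outside hij (Or.inr hs2), cnt_initSeg]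
        exact bruhat_pcnt huw s g
      · have hkey := cnt_after_swap (u := u) hij hs1 hs2 g
        rw [cnt_initSeg] at hkey
        have hw := bruhat_pcnt huw s g
        by_cases hgj : g ≤ u j
        · rw [if_pos hgj, if_pos (le_trans hgj (le_of_lt hv))] at hkey
          omega
        · by_cases hgi : g ≤ u i
          · rw [if_neg hgj, if_pos hgi] at hkey
            omega
          · rw [if_neg hgj, if_neg hgi] at hkey
            omega
  · rw [hswap]
    exact (invCount_mul_swap_desc hij hv hmid).symm
end Part4
section Part5
open Finset Equiv
variable {n : ℕ}

lemma desc_chain {w u : Perm (Fin n)} (huw : bruhatLE u w) {x : Fin n → ℝ}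
    (hx : ∀ p ∈ Etil w u, x p.1 ≤ x p.2) :
    ∀ (N : ℕ) (d e : Fin n), (e : ℕ) - (d : ℕ) ≤ N → d < e → u e < u d →
      x (u d) ≤ x (u e) := by
  intro N
  induction N with
  | zero => intro d e hN hde _; rw [Fin.lt_def] at hde; omega
  | succ N ih =>
    intro d e hN hde hv
    by_cases hmid : ∃ k : Fin n, d < k ∧ k < e ∧ u e < u k ∧ u k < u d
    · obtain ⟨k, hdk, hke, hek, hkd⟩ := hmid
      have h1 : x (u d) ≤ x (u k) := by
        apply ih d k _ hdk hkd
        rw [Fin.lt_def] at hdk hke; omega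
      have h2 : x (u k) ≤ x (u e) := by
        apply ih k e _ hke hek
        rw [Fin.lt_def] at hdk hke; omega
      linarith
    · push_neg at hmid
      exact hx (u d, u e) (mem_Etil_desc huw hde hv (fun k h1 h2 hc => absurd hc.2 (not_lt.mpr (hmid k h1 h2 hc.1))))

lemma asc_chain {w u : Perm (Fin n)} (huw : bruhatLE u w) {x : Fin n → ℝ}
    (hx : ∀ p ∈ Etil w u, x p.1 ≤ x p.2) :
    ∀ (N : ℕ) (d e : Fin n), (e : ℕ) - (d : ℕ) ≤ N → d < e → u d < u e →
      (∀ (s : ℕ) (g : Fin n), (d : ℕ) < s → s ≤ (e : ℕ) → u d < g → g ≤ u e →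
        pcnt u s g + 1 ≤ pcnt w s g) →
      x (u d) ≤ x (u e) := by
  intro N
  induction N with
  | zero => intro d e hN hde _ _; rw [Fin.lt_def] at hde; omega
  | succ N ih =>
    intro d e hN hde hv hbox
    by_cases hmid : ∃ k : Fin n, d < k ∧ k < e ∧ u d < u k ∧ u k < u e
    · obtain ⟨k, hdk, hke, hdk', hke'⟩ := hmid
      have h1 : x (u d) ≤ x (u k) := by
        apply ih d k _ hdk hdk'
        · intro s g hs1 hs2 hg1 hg2
          apply hbox s g hs1 (by rw [Fin.lt_def] at hke; omega) hg1 (le_trans hg2 (le_of_lt hke'))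
        · rw [Fin.lt_def] at hdk hke; omega
      have h2 : x (u k) ≤ x (u e) := by
        apply ih k e _ hke hke'
        · intro s g hs1 hs2 hg1 hg2
          apply hbox s g (by rw [Fin.lt_def] at hdk; omega) hs2 (lt_trans hdk' hg1) hg2
        · rw [Fin.lt_def] at hdk hke; omega
      linarith
    · push_neg at hmid
      exact hx (u d, u e)
        (mem_Etil_asc huw hde hv (fun k h1 h2 hc => absurd hc.2 (not_lt.mpr (hmid k h1 h2 hc.1))) hbox)
end Part5
section Part6
open Finset Equiv
variable {n : ℕ}

lemma scnt_mono_val (σ : Perm (Fin n)) (a b : ℕ) {g h : Fin n} (hgh : g ≤ h) :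
    scnt σ a b h ≤ scnt σ a b g := by
  apply Finset.card_le_card
  intro q hq
  simp only [Finset.mem_filter, Finset.mem_univ, true_and] at *
  exact ⟨hq.1, hq.2.1, le_trans hgh hq.2.2⟩

lemma core {w u : Perm (Fin n)} (huw : bruhatLE u w) {d : Fin n} {s : ℕ} {g : Fin n}
    (hds : (d : ℕ) < s)
    (hgd : u d < g)
    (hfeasg : pcnt u (d : ℕ) g + 1 ≤ pcnt w ((d : ℕ) + 1) g)
    (hcon : pcnt w s g ≤ pcnt u s g)
    {k : Fin n}
    (hQ : ∀ q : Fin n, d < q → (q : ℕ) < s → g ≤ u q → u k < u q)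
    (hfeas_lt : ∀ h : Fin n, h < g → u k < h → pcnt u (d : ℕ) h + 1 ≤ pcnt w ((d : ℕ) + 1) h) :
    ∃ q₀ : Fin n, d < q₀ ∧ (q₀ : ℕ) < s ∧ u k < u q₀ ∧
      (∀ h : Fin n, u k < h → h ≤ u q₀ → pcnt u (d : ℕ) h + 1 ≤ pcnt w ((d : ℕ) + 1) h) := by
  classical
  set T : Finset (Fin n) :=
    Finset.univ.filter (fun q : Fin n => d < q ∧ (q : ℕ) < s ∧ u k < u q) with hT
  have hsucc_u : pcnt u ((d : ℕ) + 1) g = pcnt u (d : ℕ) g := by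
    rw [pcnt_succ u (d : ℕ) d.2 g, if_neg (not_le.mpr (by rwa [Fin.eta]))]
    omega
  rcases T.eq_empty_or_nonempty with hTe | hTne
  · -- T empty: direct contradiction
    exfalso
    have hscnt : scnt u ((d : ℕ) + 1) s g = 0 := by
      rw [scnt, Finset.card_eq_zero]
      rw [Finset.eq_empty_iff_forall_notMem]
      intro q hq
      simp only [Finset.mem_filter, Finset.mem_univ, true_and] at hq
      have hdq : d < q := by rw [Fin.lt_def]; omega
      have := hQ q hdq hq.2.1 hq.2.2
      have : q ∈ T := by
        rw [hT, Finset.mem_filter]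
        exact ⟨Finset.mem_univ q, hdq, hq.2.1, this⟩
      rw [hTe] at this
      exact absurd this (Finset.notMem_empty q)
    have e1 : pcnt u s g = pcnt u ((d : ℕ) + 1) g + scnt u ((d : ℕ) + 1) s g :=
      pcnt_split u (by omega) g
    have e2 : pcnt w ((d : ℕ) + 1) g ≤ pcnt w s g := pcnt_mono_pos w (by omega) g
    omega
  · obtain ⟨q₀, hq₀T, hmin⟩ := T.exists_min_image u hTne
    rw [hT, Finset.mem_filter] at hq₀T
    obtain ⟨-, hdq₀, hq₀s, hkq₀⟩ := hq₀T
    refine ⟨q₀, hdq₀, hq₀s, hkq₀, ?_⟩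
    intro h hkh hhm
    rcases lt_or_ge h g with hlt | hge
    · exact hfeas_lt h hlt hkh
    · -- g ≤ h ≤ u q₀ : the counting argument
      have hgm : g ≤ u q₀ := le_trans hge hhm
      -- set equalities
      have hAg : Finset.univ.filter
          (fun q : Fin n => (d : ℕ) + 1 ≤ (q : ℕ) ∧ (q : ℕ) < s ∧ g ≤ u q) = T := by
        ext q
        simp only [hT, Finset.mem_filter, Finset.mem_univ, true_and]
        constructor
        · rintro ⟨h1, h2, h3⟩
          have hdq : d < q := by rw [Fin.lt_def]; omega
          exact ⟨hdq, h2, hQ q hdq h2 h3⟩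
        · rintro ⟨h1, h2, h3⟩
          have hq := hmin q (by rw [hT, Finset.mem_filter]; exact ⟨Finset.mem_univ q, h1, h2, h3⟩)
          rw [Fin.lt_def] at h1
          exact ⟨by omega, h2, le_trans hgm hq⟩
      have hAh : Finset.univ.filter
          (fun q : Fin n => (d : ℕ) + 1 ≤ (q : ℕ) ∧ (q : ℕ) < s ∧ h ≤ u q) = T := by
        ext q
        simp only [hT, Finset.mem_filter, Finset.mem_univ, true_and]
        constructor
        · rintro ⟨h1, h2, h3⟩
          have hdq : d < q := by rw [Fin.lt_def]; omega
          exact ⟨hdq, h2, lt_of_lt_of_le hkh h3⟩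
        · rintro ⟨h1, h2, h3⟩
          have hq := hmin q (by rw [hT, Finset.mem_filter]; exact ⟨Finset.mem_univ q, h1, h2, h3⟩)
          rw [Fin.lt_def] at h1
          exact ⟨by omega, h2, le_trans hhm hq⟩
      have e1 : pcnt u s g = pcnt u ((d : ℕ) + 1) g + scnt u ((d : ℕ) + 1) s g :=
        pcnt_split u (by omega) g
      have e2 : pcnt u s h = pcnt u ((d : ℕ) + 1) h + scnt u ((d : ℕ) + 1) s h :=
        pcnt_split u (by omega) h
      have e3 : pcnt w s g = pcnt w ((d : ℕ) + 1) g + scnt w ((d : ℕ) + 1) s g :=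
        pcnt_split w (by omega) g
      have e4 : pcnt w s h = pcnt w ((d : ℕ) + 1) h + scnt w ((d : ℕ) + 1) s h :=
        pcnt_split w (by omega) h
      have e5 : scnt w ((d : ℕ) + 1) s h ≤ scnt w ((d : ℕ) + 1) s g :=
        scnt_mono_val w _ _ hge
      have e6 : pcnt u s h ≤ pcnt w s h := bruhat_pcnt huw s h
      have e7 : scnt u ((d : ℕ) + 1) s g = T.card := by rw [scnt, hAg]
      have e8 : scnt u ((d : ℕ) + 1) s h = T.card := by rw [scnt, hAh]
      have e9 : pcnt u ((d : ℕ) + 1) h = pcnt u (d : ℕ) h := by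
        rw [pcnt_succ u (d : ℕ) d.2 h,
          if_neg (not_le.mpr (by rw [Fin.eta]; exact lt_of_lt_of_le hgd hge))]
        omega
      omega
end Part6
section Part7
open Finset Equiv
variable {n : ℕ}

lemma goal_chain {w u : Perm (Fin n)} (huw : bruhatLE u w) {x : Fin n → ℝ}
    (hx : ∀ p ∈ Etil w u, x p.1 ≤ x p.2) :
    ∀ (N : ℕ) (d e : Fin n), (e : ℕ) - (d : ℕ) ≤ N → d < e →
      (∀ g : Fin n, g ≤ u e → pcnt u (d : ℕ) g + 1 ≤ pcnt w ((d : ℕ) + 1) g) →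
      x (u d) ≤ x (u e) := by
  classical
  intro N
  induction N with
  | zero => intro d e hN hde _; rw [Fin.lt_def] at hde; omega
  | succ N ih =>
    intro d e hN hde hfeas
    rcases lt_trichotomy (u d) (u e) with hv | hv | hv
    swap
    · exact absurd (u.injective hv) (ne_of_lt hde)
    swap
    · exact desc_chain huw hx ((e : ℕ) - (d : ℕ)) d e le_rfl hde hv
    -- ascending case
    set K := Finset.univ.filter (fun k : Fin n => d < k ∧ k ≤ e ∧ u d < u k ∧
      ∀ g : Fin n, g ≤ u k → pcnt u (d : ℕ) g + 1 ≤ pcnt w ((d : ℕ) + 1) g) with hK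
    have heK : e ∈ K := by
      rw [hK, Finset.mem_filter]
      exact ⟨Finset.mem_univ e, hde, le_refl e, hv, hfeas⟩
    have hKne : K.Nonempty := ⟨e, heK⟩
    set k := K.min' hKne with hkdef
    obtain ⟨-, hdk, hke, hdkv, hfk⟩ := Finset.mem_filter.mp (K.min'_mem hKne)
    have hmin : ∀ k' ∈ K, k ≤ k' := fun k' h => K.min'_le k' h
    have hmid : ∀ p : Fin n, d < p → p < k → ¬(u d < u p ∧ u p < u k) := by
      rintro p hdp hpk ⟨h1, h2⟩
      have hpK : p ∈ K := by
        rw [hK, Finset.mem_filter]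
        refine ⟨Finset.mem_univ p, hdp, le_trans (le_of_lt hpk) hke, h1, ?_⟩
        intro g hg
        exact hfk g (le_trans hg (le_of_lt h2))
      exact absurd (hmin p hpK) (not_le.mpr hpk)
    have hbox : ∀ (s : ℕ) (g : Fin n), (d : ℕ) < s → s ≤ (k : ℕ) → u d < g → g ≤ u k →
        pcnt u s g + 1 ≤ pcnt w s g := by
      intro s g hs1 hs2 hg1 hg2
      by_contra hcon
      push_neg at hcon
      have hcon' : pcnt w s g ≤ pcnt u s g := by omega
      have hQ : ∀ q : Fin n, d < q → (q : ℕ) < s → g ≤ u q → u k < u q := by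
        intro q hdq hqs hgq
        have hqk : q < k := by rw [Fin.lt_def]; omega
        have hne : u q ≠ u k := fun hc => (ne_of_lt hqk) (u.injective hc)
        have h1 : u d < u q := lt_of_lt_of_le hg1 hgq
        rcases lt_or_ge (u k) (u q) with h | h
        · exact h
        · exact absurd ⟨h1, lt_of_le_of_ne h hne⟩ (hmid q hdq hqk)
      obtain ⟨q₀, hdq₀, hq₀s, hkq₀, hq₀f⟩ := core huw hs1 hg1 (hfk g hg2) hcon' hQ
        (fun h hlt hgt => absurd (lt_trans hgt (lt_of_lt_of_le hlt hg2)) (lt_irrefl _))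
      have hq₀K : q₀ ∈ K := by
        rw [hK, Finset.mem_filter]
        refine ⟨Finset.mem_univ q₀, hdq₀, ?_, lt_trans hdkv hkq₀, ?_⟩
        · rw [Fin.le_def]
          have := Fin.le_def.mp hke
          omega
        · intro h hh
          rcases le_or_gt h (u k) with h' | h'
          · exact hfk h h'
          · exact hq₀f h h' hh
      have := Fin.le_def.mp (hmin q₀ hq₀K)
      omega
    have hstep : x (u d) ≤ x (u k) :=
      asc_chain huw hx ((k : ℕ) - (d : ℕ)) d k le_rfl hdk hdkv hbox
    rcases eq_or_lt_of_le hke with heq | hke'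
    · rw [hkdef, heq] at hstep; exact hstep
    · rcases lt_trichotomy (u k) (u e) with hv2 | hv2 | hv2
      · -- recurse with FEAS(k, e)
        have hfeask : ∀ g : Fin n, g ≤ u e → pcnt u (k : ℕ) g + 1 ≤ pcnt w ((k : ℕ) + 1) g := by
          intro g hg
          rcases le_or_gt g (u k) with hgk | hgk
          · have h1 : pcnt u ((k : ℕ) + 1) g = pcnt u (k : ℕ) g + 1 := by
              rw [pcnt_succ u (k : ℕ) k.2 g, if_pos (by rwa [Fin.eta])]
            have h2 := bruhat_pcnt huw ((k : ℕ) + 1) g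
            omega
          · by_contra hcon
            push_neg at hcon
            have hc1 : pcnt u ((k : ℕ) + 1) g = pcnt u (k : ℕ) g := by
              rw [pcnt_succ u (k : ℕ) k.2 g, if_neg (not_le.mpr (by rwa [Fin.eta]))]
              omega
            have hcon' : pcnt w ((k : ℕ) + 1) g ≤ pcnt u ((k : ℕ) + 1) g := by omega
            have hQ : ∀ q : Fin n, d < q → (q : ℕ) < (k : ℕ) + 1 → g ≤ u q → u k < u q :=
              fun q _ _ hgq => lt_of_lt_of_le hgk hgq
            have hdk' : (d : ℕ) < (k : ℕ) + 1 := by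
              have := Fin.lt_def.mp hdk; omega
            obtain ⟨q₀, hdq₀, hq₀s, hkq₀, hq₀f⟩ := core huw hdk' (lt_trans hdkv hgk)
              (hfeas g hg) hcon' hQ
              (fun h hlt _ => hfeas h (le_trans (le_of_lt hlt) hg))
            have hq₀k : (q₀ : ℕ) < (k : ℕ) := by
              have hne : q₀ ≠ k := fun hc => (ne_of_lt hkq₀) (by rw [hc])
              have : (q₀ : ℕ) ≠ (k : ℕ) := fun hc => hne (Fin.ext hc)
              omega
            have hq₀K : q₀ ∈ K := by
              rw [hK, Finset.mem_filter]
              refine ⟨Finset.mem_univ q₀, hdq₀, ?_, lt_trans hdkv hkq₀, ?_⟩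
              · rw [Fin.le_def]
                have h1 := Fin.lt_def.mp hke'
                omega
              · intro h hh
                rcases le_or_gt h (u k) with h' | h'
                · exact hfk h h'
                · exact hq₀f h h' hh
            have := Fin.le_def.mp (hmin q₀ hq₀K)
            omega
        have hrec : x (u k) ≤ x (u e) := by
          apply ih k e _ hke' hfeask
          have h1 := Fin.lt_def.mp hdk
          have h2 := Fin.lt_def.mp hke'
          omega
        linarith
      · exact absurd (u.injective hv2) (ne_of_lt hke')
      · have hd2 : x (u k) ≤ x (u e) :=
          desc_chain huw hx ((e : ℕ) - (k : ℕ)) k e le_rfl hke' hv2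
        linarith
end Part7
section Part8
open Finset Equiv
variable {n : ℕ}

lemma etil_ineq {w u : Perm (Fin n)} {x : Fin n → ℝ}
    (hxE : ∀ a b : Fin n, (a, b) ∈ Ew w u → x a ≤ x b) :
    ∀ p ∈ Etil w u, x p.1 ≤ x p.2 := by
  classical
  suffices h : ∀ N : ℕ, ∀ p ∈ Etil w u, ((u.symm p.2 : ℕ) - (u.symm p.1 : ℕ)) ≤ N →
      x p.1 ≤ x p.2 by
    intro p hp
    exact h n p hp (by omega)
  intro N
  induction N with
  | zero =>
    intro p hp h0
    obtain ⟨i, j, hij, heq, -, -⟩ := hp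
    rw [heq] at h0
    simp only [Equiv.symm_apply_apply] at h0
    rw [Fin.lt_def] at hij
    omega
  | succ N ih =>
    intro p hp hN
    by_cases hEw : p ∈ Ew w u
    · have := hxE p.1 p.2 (by rwa [Prod.mk.eta])
      exact this
    · have hdec : Decomposable w u p := by
        by_contra hc
        exact hEw ⟨hp, hc⟩
      obtain ⟨m, c, hm2, hc0, hcm, hstep⟩ := hdec
      -- positions
      set pos : ℕ → ℕ := fun t => ((u.symm (c t) : Fin n) : ℕ) with hpos
      have hposmono : ∀ t, t < m → pos t < pos (t + 1) := by
        intro t htm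
        obtain ⟨i, j, hij, heq, -, -⟩ := (hstep t htm).1
        have h1 : c t = u i := congrArg Prod.fst heq
        have h2 : c (t + 1) = u j := congrArg Prod.snd heq
        rw [hpos]
        simp only [h1, h2, Equiv.symm_apply_apply]
        exact Fin.lt_def.mp hij
      have hadd : ∀ (a t : ℕ), a + t ≤ m → pos a + t ≤ pos (a + t) := by
        intro a t
        induction t with
        | zero => intro _; simp
        | succ t iht =>
          intro hat
          have h1 := iht (by omega)
          have h2 := hposmono (a + t) (by omega)
          have : a + (t + 1) = (a + t) + 1 := by omega
          rw [this]
          omega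
      -- each step has strictly smaller gap
      have hstepgap : ∀ t, t < m → pos (t + 1) - pos t ≤ N := by
        intro t htm
        have h1 : pos 0 + t ≤ pos t := by
          have := hadd 0 t (by omega); simpa using this
        have h2 : pos (t + 1) + (m - (t + 1)) ≤ pos m := by
          have := hadd (t + 1) (m - (t + 1)) (by omega)
          rwa [show (t + 1) + (m - (t + 1)) = m by omega] at this
        have hNbound : pos m - pos 0 ≤ N + 1 := by
          simp only [hpos, hc0, hcm]
          exact hN
        omega
      -- telescoping
      have htel : ∀ t, t ≤ m → x (c 0) ≤ x (c t) := by
        intro t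
        induction t with
        | zero => intro _; exact le_refl _
        | succ t iht =>
          intro htm
          have h1 := iht (by omega)
          have h2 : x (c t) ≤ x (c (t + 1)) := by
            apply ih (c t, c (t + 1)) (hstep t (by omega)).1
            exact hstepgap t (by omega)
          linarith
      have := htel m (le_refl m)
      rw [hc0, hcm] at this
      exact this
end Part8
section Part9
open Finset Equiv
variable {n : ℕ}

lemma image_idx {u v : Perm (Fin n)} {idx : Fin n → Fin n}
    (hval : ∀ e : Fin n, u e = v (idx e)) (d : Fin n) :
    ((Finset.univ.filter fun e : Fin n => e < d).image fun e => v (idx e))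
      = initSeg u (d : ℕ) := by
  rw [initSeg]
  have hset : (Finset.univ.filter fun e : Fin n => e < d)
      = (Finset.univ.filter fun e : Fin n => (e : ℕ) < (d : ℕ)) := by
    ext e; simp only [Finset.mem_filter, Finset.mem_univ, true_and, Fin.lt_def]
  rw [hset]
  apply Finset.image_congr
  intro e _
  exact (hval e).symm

lemma insert_initSeg (u : Perm (Fin n)) (d : Fin n) :
    insert (u d) (initSeg u (d : ℕ)) = initSeg u ((d : ℕ) + 1) := by
  rw [initSeg_succ u (d : ℕ) d.2, Fin.eta]

lemma dirB {w u v : Perm (Fin n)} (hg : GreedyRel w v u) {x : Fin n → ℝ}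
    (hmono : ∀ i j : Fin n, i ≤ j → x (v i) ≤ x (v j)) :
    ∀ a b : Fin n, (a, b) ∈ Ew w u → x a ≤ x b := by
  obtain ⟨idx, hval, hleast⟩ := hg
  intro a b hab
  obtain ⟨i, j, hij, heq, hbru, -⟩ := hab.1
  have ha : a = u i := congrArg Prod.fst heq
  have hb : b = u j := congrArg Prod.snd heq
  -- idx j is in the step-i set
  have hmem : (∀ e : Fin n, e < i → idx e ≠ idx j) ∧
      domLE (insert (v (idx j))
        ((Finset.univ.filter fun e : Fin n => e < i).image fun e => v (idx e)))
        (initSeg w ((i : ℕ) + 1)) := by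
    constructor
    · intro e hei
      exact (hleast j).1.1 e (lt_trans hei hij)
    · rw [image_idx hval i, ← hval j]
      -- target: domLE (insert (u j) (initSeg u i)) (initSeg w (i+1))
      have hkey := hbru ((i : ℕ) + 1)
      have hswap : Equiv.swap (u i) (u j) * u = u * Equiv.swap i j :=
        (Equiv.mul_swap_eq_swap_mul u i j).symm
      rw [hswap] at hkey
      rw [initSeg_mul_swap hij (by omega) (by exact Fin.lt_def.mp hij)] at hkey
      have hins : (initSeg u ((i : ℕ) + 1)).erase (u i) = initSeg u (i : ℕ) := by
        rw [← insert_initSeg u i]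
        apply Finset.erase_insert
        rw [mem_initSeg]
        simp
      rwa [hins] at hkey
  have hle : idx i ≤ idx j := (hleast i).2 hmem
  have := hmono (idx i) (idx j) hle
  rw [← hval i, ← hval j] at this
  rw [ha, hb]
  exact this
end Part9
section Part10
open Finset Equiv
variable {n : ℕ}

lemma dirA {w u : Perm (Fin n)} (huw : bruhatLE u w) {x : Fin n → ℝ}
    (hxE : ∀ a b : Fin n, (a, b) ∈ Ew w u → x a ≤ x b) :
    ∃ v : Equiv.Perm (Fin n), GreedyRel w v u ∧
      ∀ i j : Fin n, i ≤ j → x (v i) ≤ x (v j) := by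
  classical
  have hEtil := etil_ineq hxE
  set r : Fin n → Fin n → Prop :=
    fun s t => x s < x t ∨ (x s = x t ∧ u.symm s ≤ u.symm t) with hr
  haveI : IsTrans (Fin n) r := by
    constructor
    rintro s t p (h1 | ⟨h1, h1'⟩) (h2 | ⟨h2, h2'⟩)
    · exact Or.inl (lt_trans h1 h2)
    · exact Or.inl (h2 ▸ h1)
    · exact Or.inl (h1 ▸ h2)
    · exact Or.inr ⟨h1.trans h2, le_trans h1' h2'⟩
  haveI : Std.Antisymm r := by
    constructor
    rintro s t (h1 | ⟨h1, h1'⟩) (h2 | ⟨h2, h2'⟩)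
    · exact absurd h2 (not_lt.mpr (le_of_lt h1))
    · exact absurd h2.symm (ne_of_lt h1)
    · exact absurd h1 (ne_of_gt h2)
    · exact u.symm.injective (le_antisymm h1' h2')
  haveI : Std.Total r := by
    constructor
    intro s t
    rcases lt_trichotomy (x s) (x t) with h | h | h
    · exact Or.inl (Or.inl h)
    · rcases le_total (u.symm s) (u.symm t) with h' | h'
      · exact Or.inl (Or.inr ⟨h, h'⟩)
      · exact Or.inr (Or.inr ⟨h.symm, h'⟩)
    · exact Or.inr (Or.inl h)
  set L := Finset.univ.sort r with hL
  have hlen : L.length = n := by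
    rw [hL, Finset.length_sort, Finset.card_univ, Fintype.card_fin]
  have hnd : L.Nodup := by rw [hL]; exact Finset.sort_nodup _ r
  set f : Fin n → Fin n := fun k => L.get (Fin.cast hlen.symm k) with hf
  have hinj : Function.Injective f := by
    intro a b hab
    have h := List.nodup_iff_injective_get.mp hnd hab
    have h2 : ((Fin.cast hlen.symm a : Fin L.length) : ℕ)
        = ((Fin.cast hlen.symm b : Fin L.length) : ℕ) := congrArg Fin.val h
    simp only [Fin.coe_cast] at h2
    exact Fin.ext h2
  have hbij := Finite.injective_iff_bijective.mp hinj
  set v : Equiv.Perm (Fin n) := Equiv.ofBijective f hbij with hv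
  have hva : ∀ k, v k = f k := fun k => rfl
  have hsort : ∀ a b : Fin n, a < b → r (f a) (f b) := by
    intro a b hab
    exact List.Pairwise.rel_get_of_lt (hL ▸ Finset.pairwise_sort _ r)
      (show ((Fin.cast hlen.symm a) : ℕ) < ((Fin.cast hlen.symm b) : ℕ) from hab)
  have hmono : ∀ i j : Fin n, i ≤ j → x (v i) ≤ x (v j) := by
    intro i j hij
    rcases eq_or_lt_of_le hij with rfl | hlt
    · exact le_refl _
    · rcases hsort i j hlt with h | h
      · exact le_of_lt h
      · exact le_of_eq h.1
  set idx : Fin n → Fin n := fun d => v.symm (u d) with hidx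
  have hval : ∀ d, u d = v (idx d) := fun d => (v.apply_symm_apply (u d)).symm
  refine ⟨v, ⟨idx, fun d => hval d, ?_⟩, hmono⟩
  intro d
  constructor
  · constructor
    · intro e hed hc
      have : u e = u d := by rw [hval e, hval d, hc]
      exact (ne_of_lt hed) (u.injective this)
    · rw [image_idx hval d, ← hval d, insert_initSeg u d]
      exact huw ((d : ℕ) + 1)
  · rintro i' ⟨h1, h2⟩
    by_contra hcon
    push_neg at hcon
    set e := u.symm (v i') with he
    have hue : u e = v i' := by rw [he]; simp
    have hed : e ≠ d := by
      intro hc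
      rw [hc] at hue
      have : i' = idx d := v.injective (by rw [← hval d]; exact hue.symm)
      exact (ne_of_lt hcon) this
    have hnotlt : ¬ e < d := by
      intro hlt
      apply h1 e hlt
      show v.symm (u e) = i'
      rw [hue]
      simp
    have hde : d < e := lt_of_le_of_ne (not_lt.mp hnotlt) (Ne.symm hed)
    have hxlt : x (u e) < x (u d) := by
      rcases hsort i' (idx d) hcon with h | h
      · have h' : x (v i') < x (v (idx d)) := h
        rwa [← hue, ← hval d] at h'
      · exfalso
        have h2' : u.symm (v i') ≤ u.symm (v (idx d)) := h.2
        rw [← hue, ← hval d] at h2'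
        simp only [Equiv.symm_apply_apply] at h2'
        exact absurd h2' (not_le.mpr hde)
    rw [image_idx hval d, ← hue] at h2
    have hnotmem : u e ∉ initSeg u (d : ℕ) := by
      rw [mem_initSeg]
      simp only [Equiv.symm_apply_apply]
      exact not_lt.mpr (Nat.le_of_lt (Fin.lt_def.mp hde)) |>.elim ∘ id
    rcases lt_trichotomy (u d) (u e) with hv2 | hv2 | hv2
    · have hfeas : ∀ g : Fin n, g ≤ u e → pcnt u (d : ℕ) g + 1 ≤ pcnt w ((d : ℕ) + 1) g := by
        intro g hg
        have hcnt := cnt_le_of_domLE h2 g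
        rw [cnt_insert hnotmem g, if_pos hg, cnt_initSeg, cnt_initSeg] at hcnt
        omega
      have := goal_chain huw hEtil ((e : ℕ) - (d : ℕ)) d e le_rfl hde hfeas
      linarith
    · exact hed (u.injective hv2.symm)
    · have := desc_chain huw hEtil ((e : ℕ) - (d : ℕ)) d e le_rfl hde hv2
      linarith
end Part10
/-- For `u ≤ w`, the dual cone of the cone generated by
`{e_b − e_a : (a,b) ∈ E_w(u)}` is the union of the cones `C(v)` over all `v` with `v' = u`. -/
theorem dual_cone_eq_union_u {n : ℕ} (w u : Equiv.Perm (Fin n))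
    (huw : bruhatLE u w) (x : Fin n → ℝ) :
    (∀ a b : Fin n, (a, b) ∈ Ew w u → x a ≤ x b) ↔
      ∃ v : Equiv.Perm (Fin n), GreedyRel w v u ∧
        ∀ i j : Fin n, i ≤ j → x (v i) ≤ x (v j) := by
  constructor
  · intro hxE
    exact dirA huw hxE
  · rintro ⟨v, hg, hmono⟩ a b hab
    exact dirB hg hmono a b hab

end SchubertToric
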